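/- For every integer r ≥ 1, the r-th power of arctan has the series expansion arctan(x)^r = r!·∑_{n₁>n₂>⋯>n_r>0} (−1)^{n₁−r}·x^{2n₁−r} / ((2n₁−r)·(2n₂−r+1)⋯(2n_r−1)) for |x| ≤ 1 (with x real and, for convergence at x = ±1, r-fold iterated summation). -/

import Mathlib

open Real Filter Classical

noncomputable def G (s M : ℕ) : ℝ :=
  ∑ f ∈ (Fintype.piFinset fun _ : Fin s => Finset.Icc 1 M).filter (fun f => StrictAnti f),
    ∏ i : Fin s, (2 * (f i : ℝ) - (s : ℝ) + (i : ℕ))⁻¹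

lemma fin_bound {s : ℕ} {f : Fin s → ℕ} (hf : StrictAnti f) (h1 : ∀ i, 1 ≤ f i) (i : Fin s) :
    s ≤ f i + i := by
  have key : ∀ k : ℕ, ∀ (hk : (i : ℕ) + k < s), f ⟨(i : ℕ) + k, hk⟩ + k ≤ f i := by
    intro k
    induction k with
    | zero =>
      intro hk
      have h0 : (⟨(i : ℕ) + 0, hk⟩ : Fin s) = i := by ext; simp
      simp [h0]
    | succ k ih =>
      intro hk
      have hk' : (i : ℕ) + k < s := by omega
      have hlt : f ⟨(i : ℕ) + (k + 1), hk⟩ < f ⟨(i : ℕ) + k, hk'⟩ := by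
        apply hf; rw [Fin.mk_lt_mk]; omega
      have := ih hk'
      omega
  have hs : 0 < s := i.pos
  have hk : (i : ℕ) + (s - 1 - (i : ℕ)) < s := by omega
  have h2 := key (s - 1 - (i : ℕ)) hk
  have h3 := h1 ⟨(i : ℕ) + (s - 1 - (i : ℕ)), hk⟩
  omega

lemma mem_W {s M : ℕ} {f : Fin s → ℕ}
    (hf : f ∈ (Fintype.piFinset fun _ : Fin s => Finset.Icc 1 M).filter (fun f => StrictAnti f)) :
    StrictAnti f ∧ ∀ i, 1 ≤ f i ∧ f i ≤ M := by
  simp only [Finset.mem_filter, Fintype.mem_piFinset, Finset.mem_Icc] at hf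
  exact ⟨hf.2, fun i => (hf.1 i)⟩

lemma factor_lb {s M : ℕ} {f : Fin s → ℕ}
    (hf : f ∈ (Fintype.piFinset fun _ : Fin s => Finset.Icc 1 M).filter (fun f => StrictAnti f))
    (i : Fin s) : (f i : ℝ) ≤ 2 * (f i : ℝ) - (s : ℝ) + (i : ℕ) := by
  obtain ⟨ha, hb⟩ := mem_W hf
  have h := fin_bound ha (fun j => (hb j).1) i
  have : (s : ℝ) ≤ (f i : ℝ) + (i : ℕ) := by exact_mod_cast h
  linarith

lemma factor_pos {s M : ℕ} {f : Fin s → ℕ}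
    (hf : f ∈ (Fintype.piFinset fun _ : Fin s => Finset.Icc 1 M).filter (fun f => StrictAnti f))
    (i : Fin s) : (0 : ℝ) < 2 * (f i : ℝ) - (s : ℝ) + (i : ℕ) := by
  have h1 := (mem_W hf).2 i
  have : (1 : ℝ) ≤ (f i : ℝ) := by exact_mod_cast h1.1
  linarith [factor_lb hf i]

lemma G_nonneg (s M : ℕ) : 0 ≤ G s M := by
  apply Finset.sum_nonneg
  intro f hf
  exact Finset.prod_nonneg fun i _ => inv_nonneg.2 (factor_pos hf i).le

lemma G_eq_zero {s M : ℕ} (h : M < s) : G s M = 0 := by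
  apply Finset.sum_eq_zero
  intro f hf
  exfalso
  obtain ⟨ha, hb⟩ := mem_W hf
  have hs : 0 < s := lt_of_le_of_lt (Nat.zero_le M) h
  have h2 := fin_bound ha (fun j => (hb j).1) ⟨0, hs⟩
  have h3 := (hb ⟨0, hs⟩).2
  simp only [Fin.val_mk, add_zero] at h2
  omega

lemma G_zero_eq (M : ℕ) : G 0 M = 1 := by
  rw [G]
  rw [show (Fintype.piFinset fun _ : Fin 0 => Finset.Icc 1 M).filter (fun f => StrictAnti f)
      = Fintype.piFinset fun _ : Fin 0 => Finset.Icc 1 M from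
    Finset.filter_true_of_mem (fun f _ => fun i j hij => absurd hij (by exact i.elim0))]
  simp

lemma peel (s N : ℕ) (F : (Fin (s + 1) → ℕ) → ℝ) :
    ∑ f ∈ (Fintype.piFinset fun _ : Fin (s + 1) => Finset.Icc 1 N).filter (fun f => StrictAnti f),
        F f
      = ∑ n ∈ Finset.Icc 1 N,
          ∑ g ∈ (Fintype.piFinset fun _ : Fin s => Finset.Icc 1 (n - 1)).filter
              (fun g => StrictAnti g),
            F (Fin.cons n g) := by
  rw [Finset.sum_sigma']
  apply Finset.sum_nbij' (i := fun f => ⟨f 0, Fin.tail f⟩)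
    (j := fun p => Fin.cons p.1 p.2)
  · intro f hf
    obtain ⟨ha, hb⟩ := mem_W hf
    simp only [Finset.mem_sigma, Finset.mem_filter, Fintype.mem_piFinset, Finset.mem_Icc]
    refine ⟨⟨(hb 0).1, (hb 0).2⟩, ⟨fun i => ⟨(hb i.succ).1, ?_⟩, ?_⟩⟩
    · have h1 : f i.succ < f 0 := ha (Fin.succ_pos i)
      have h2 : Fin.tail f i = f i.succ := rfl
      omega
    · intro i j hij
      exact ha (Fin.succ_lt_succ_iff.mpr hij)
  · intro p hp
    simp only [Finset.mem_sigma, Finset.mem_filter, Fintype.mem_piFinset, Finset.mem_Icc] at hp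
    obtain ⟨⟨hn1, hnN⟩, hg, hgs⟩ := hp
    simp only [Finset.mem_filter, Fintype.mem_piFinset, Finset.mem_Icc]
    constructor
    · intro i
      refine Fin.cases ?_ (fun j => ?_) i
      · simp only [Fin.cons_zero]; exact ⟨hn1, hnN⟩
      · simp only [Fin.cons_succ]
        exact ⟨(hg j).1, le_trans (hg j).2 (by omega)⟩
    · intro i j
      refine Fin.cases ?_ ?_ j
      · intro h; exact absurd h (Fin.not_lt_zero i)
      · intro j'
        refine Fin.cases ?_ ?_ i
        · intro _
          simp only [Fin.cons_succ, Fin.cons_zero]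
          have := (hg j').2
          omega
        · intro i' h
          simp only [Fin.cons_succ]
          exact hgs (Fin.succ_lt_succ_iff.mp h)
  · intro f hf; exact Fin.cons_self_tail f
  · intro p hp
    simp only [Fin.cons_zero, Fin.tail_cons]
  · intro f hf; exact congrArg F (Fin.cons_self_tail f).symm

lemma G_succ (s N : ℕ) :
    G (s + 1) N = ∑ n ∈ Finset.Icc 1 N, (2 * (n : ℝ) - (s + 1 : ℕ))⁻¹ * G s (n - 1) := by
  rw [G, peel]
  apply Finset.sum_congr rfl
  intro n hn
  rw [G, Finset.mul_sum]
  apply Finset.sum_congr rfl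
  intro g hg
  rw [Fin.prod_univ_succ]
  simp only [Fin.cons_zero, Fin.cons_succ]
  congr 1
  · push_cast [Fin.val_zero]; ring_nf
  · apply Finset.prod_congr rfl
    intro i _
    congr 1
    push_cast [Fin.val_succ]
    ring

noncomputable def S (r N : ℕ) (x : ℝ) : ℝ :=
  if r = 0 then 1 else
    ∑ n ∈ Finset.Icc 1 N,
      ((-1 : ℝ) ^ (n + r) * G (r - 1) (n - 1) / (2 * (n : ℝ) - (r : ℝ))) * x ^ (2 * n - r)

lemma theoremSum_eq (s N : ℕ) (x : ℝ) :
    ∑ f ∈ (Fintype.piFinset fun _ : Fin (s + 1) => Finset.Icc 1 N).filter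
        (fun f => StrictAnti f),
      (-1 : ℝ) ^ (f 0 + (s + 1)) * x ^ (2 * f 0 - (s + 1)) /
        ∏ i : Fin (s + 1), (2 * (f i : ℝ) - ((s + 1 : ℕ) : ℝ) + (i : ℕ)) = S (s + 1) N x := by
  rw [peel, S]
  simp only [Nat.succ_ne_zero, if_false, Nat.add_sub_cancel]
  apply Finset.sum_congr rfl
  intro n hn
  rw [G, Finset.mul_sum, Finset.sum_div, Finset.sum_mul]
  apply Finset.sum_congr rfl
  intro g hg
  rw [Fin.prod_univ_succ]
  simp only [Fin.cons_zero, Fin.cons_succ]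
  have hfac : ∀ i : Fin s,
      (2 * ((g i : ℕ) : ℝ) - ((s + 1 : ℕ) : ℝ) + ((i.succ : Fin (s + 1)) : ℕ))
        = 2 * (g i : ℝ) - (s : ℝ) + (i : ℕ) := by
    intro i
    push_cast [Fin.val_succ]
    ring
  rw [Finset.prod_congr rfl (fun i _ => hfac i)]
  rw [div_eq_mul_inv, mul_inv, ← Finset.prod_inv_distrib]
  push_cast [Fin.val_zero]
  ring

lemma G_le (s M : ℕ) : G s M ≤ (∑ k ∈ Finset.Icc 1 M, (k : ℝ)⁻¹) ^ s := by
  calc G s M ≤ ∑ f ∈ (Fintype.piFinset fun _ : Fin s => Finset.Icc 1 M).filter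
        (fun f => StrictAnti f), ∏ i : Fin s, ((f i : ℕ) : ℝ)⁻¹ := by
        apply Finset.sum_le_sum
        intro f hf
        apply Finset.prod_le_prod
        · intro i _; exact inv_nonneg.2 (factor_pos hf i).le
        · intro i _
          apply inv_anti₀
          · have := ((mem_W hf).2 i).1
            exact_mod_cast Nat.lt_of_lt_of_le Nat.zero_lt_one this
          · exact factor_lb hf i
    _ ≤ ∑ f ∈ Fintype.piFinset fun _ : Fin s => Finset.Icc 1 M,
          ∏ i : Fin s, ((f i : ℕ) : ℝ)⁻¹ := by
        apply Finset.sum_le_sum_of_subset_of_nonneg (Finset.filter_subset _ _)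
        intro f _ _
        apply Finset.prod_nonneg
        intro i _
        exact inv_nonneg.2 (Nat.cast_nonneg _)
    _ = ∏ _i : Fin s, ∑ k ∈ Finset.Icc 1 M, ((k : ℕ) : ℝ)⁻¹ :=
        (Finset.prod_univ_sum (fun _ : Fin s => Finset.Icc 1 M)
          (fun _ k => ((k : ℕ) : ℝ)⁻¹)).symm
    _ = (∑ k ∈ Finset.Icc 1 M, (k : ℝ)⁻¹) ^ s := by
        rw [Finset.prod_const, Finset.card_univ, Fintype.card_fin]

lemma H_le (M : ℕ) : ∑ k ∈ Finset.Icc 1 M, (k : ℝ)⁻¹ ≤ 1 + Real.log M := by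
  have h := harmonic_le_one_add_log M
  rw [harmonic_eq_sum_Icc] at h
  calc (∑ k ∈ Finset.Icc 1 M, (k : ℝ)⁻¹)
      = ((∑ k ∈ Finset.Icc 1 M, ((k : ℚ))⁻¹ : ℚ) : ℝ) := by push_cast; rfl
    _ ≤ 1 + Real.log M := h

lemma S_eq (r N : ℕ) (hr : r ≠ 0) : S r N = fun x =>
    ∑ n ∈ Finset.Icc 1 N,
      ((-1 : ℝ) ^ (n + r) * G (r - 1) (n - 1) / (2 * (n : ℝ) - (r : ℝ))) * x ^ (2 * n - r) := by
  funext x; rw [S, if_neg hr]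

lemma S_continuous (r N : ℕ) : Continuous (S r N) := by
  rcases eq_or_ne r 0 with h | h
  · have : S r N = fun _ => 1 := by funext x; rw [S, if_pos h]
    rw [this]; exact continuous_const
  · rw [S_eq r N h]
    exact continuous_finset_sum _ fun n _ => continuous_const.mul (continuous_pow _)

lemma S_zero (r N : ℕ) (hr : r ≠ 0) : S r N 0 = 0 := by
  rw [S_eq r N hr]
  apply Finset.sum_eq_zero
  intro n hn
  rcases lt_or_ge n r with h | h
  · have hG : G (r - 1) (n - 1) = 0 := by
      apply G_eq_zero
      simp only [Finset.mem_Icc] at hn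
      omega
    rw [hG]; ring
  · have hk : 2 * n - r ≠ 0 := by omega
    rw [zero_pow hk]; ring

lemma S_neg (r N : ℕ) (x : ℝ) : S r N (-x) = (-1 : ℝ) ^ r * S r N x := by
  rcases eq_or_ne r 0 with h | h
  · subst h; rw [S, S]; norm_num
  · rw [S_eq r N h]
    simp only [Finset.mul_sum]
    apply Finset.sum_congr rfl
    intro n hn
    rcases lt_or_ge n r with hlt | hle
    · have hG : G (r - 1) (n - 1) = 0 := by
        apply G_eq_zero
        simp only [Finset.mem_Icc] at hn
        omega
      rw [hG]; ring
    · have h1 : ((-1 : ℝ)) ^ (2 * n - r) * (-1) ^ r = 1 := by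
        rw [← pow_add, show 2 * n - r + r = 2 * n by omega, pow_mul]
        norm_num
      have h2 : ((-1 : ℝ)) ^ r * (-1) ^ r = 1 := by
        rw [← mul_pow]; norm_num
      have h3 : ((-1 : ℝ)) ^ (2 * n - r) = (-1) ^ r := by
        calc ((-1 : ℝ)) ^ (2 * n - r) = (-1 : ℝ) ^ (2 * n - r) * ((-1) ^ r * (-1) ^ r) := by
              rw [h2, mul_one]
          _ = ((-1 : ℝ) ^ (2 * n - r) * (-1) ^ r) * (-1) ^ r := by ring
          _ = (-1) ^ r := by rw [h1, one_mul]
      rw [neg_pow x, h3]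
      ring

lemma S_hasDerivAt (r N : ℕ) (hr : r ≠ 0) (x : ℝ) :
    HasDerivAt (S r N)
      (∑ n ∈ Finset.Icc 1 N, (-1 : ℝ) ^ (n + r) * x ^ (2 * n - r - 1) * G (r - 1) (n - 1)) x := by
  rw [S_eq r N hr]
  apply HasDerivAt.fun_sum
  intro n hn
  have h0 := (hasDerivAt_pow (2 * n - r) x).const_mul
    ((-1 : ℝ) ^ (n + r) * G (r - 1) (n - 1) / (2 * (n : ℝ) - (r : ℝ)))
  refine h0.congr_deriv ?_; symm
  rcases lt_or_ge n r with hlt | hle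
  · have hG : G (r - 1) (n - 1) = 0 := by
      apply G_eq_zero
      simp only [Finset.mem_Icc] at hn
      omega
    rw [hG]; ring
  · have hc : ((2 * n - r : ℕ) : ℝ) = 2 * (n : ℝ) - (r : ℝ) := by
      have h2 : r ≤ 2 * n := by omega
      push_cast [h2]
      ring
    rw [hc]
    have hd : 2 * (n : ℝ) - (r : ℝ) ≠ 0 := by
      have h2 : (r : ℝ) < 2 * (n : ℝ) := by exact_mod_cast (show r < 2 * n by omega)
      linarith
    field_simp

lemma key_identity (r : ℕ) (hr : r ≠ 0) (N : ℕ) (x : ℝ) :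
    (1 + x ^ 2) *
        (∑ n ∈ Finset.Icc 1 N, (-1 : ℝ) ^ (n + r) * x ^ (2 * n - r - 1) * G (r - 1) (n - 1))
      = S (r - 1) (N - 1) x + (-1 : ℝ) ^ (N + r) * x ^ (2 * N + 1 - r) * G (r - 1) (N - 1) := by
  induction N with
  | zero =>
    simp only [Finset.Icc_eq_empty_of_lt (by omega : (0:ℕ) < 1), Finset.sum_empty, mul_zero]
    rcases eq_or_ne r 1 with h1 | h1
    · subst h1
      rw [S, if_pos rfl]
      simp only [Nat.sub_self, G_zero_eq]
      norm_num
    · rw [S_eq _ _ (by omega), G_eq_zero (by omega : 0 < r - 1)]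
      simp [Finset.Icc_eq_empty_of_lt (by omega : (0:ℕ) < 1)]
  | succ N ih =>
    rw [Finset.sum_Icc_succ_top (by omega : 1 ≤ N + 1), mul_add, ih]
    simp only [Nat.add_sub_cancel]
    rcases eq_or_ne r 1 with h1 | h1
    · subst h1
      simp only [Nat.sub_self, G_zero_eq, mul_one]
      rw [S, if_pos rfl, S, if_pos rfl]
      rw [show 2 * N + 1 - 1 = 2 * N by omega, show 2 * (N + 1) - 1 - 1 = 2 * N by omega,
        show 2 * (N + 1) + 1 - 1 = 2 * N + 2 by omega,
        show N + 1 + 1 = (N + 1) + 1 by omega, pow_succ ((-1:ℝ)) (N + 1),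
        show 2 * N + 2 = 2 * N + 2 by rfl, pow_add x (2 * N) 2]
      ring
    · -- r ≥ 2
      have hr2 : 2 ≤ r := by omega
      rcases lt_or_ge (2 * N + 1) r with hsmall | hbig
      · -- all G terms vanish
        have hG1 : G (r - 1) N = 0 := G_eq_zero (by omega)
        have hG2 : G (r - 1) (N - 1) = 0 := G_eq_zero (by omega)
        have hSS : S (r - 1) (N - 1) x = S (r - 1) N x := by
          rcases Nat.eq_zero_or_pos N with h0 | h0
          · rw [h0]
          · obtain ⟨M, rfl⟩ : ∃ M, N = M + 1 := ⟨N - 1, by omega⟩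
            rw [S_eq _ _ (by omega), S_eq _ _ (by omega)]
            simp only [Nat.add_sub_cancel]
            rw [Finset.sum_Icc_succ_top (by omega : 1 ≤ M + 1)]
            have : G (r - 1 - 1) (M + 1 - 1) = 0 := G_eq_zero (by omega)
            rw [this]
            simp
        rw [hG1, hG2, hSS]
        ring
      · -- main case : r ≤ 2 * N + 1, so N ≥ 1
        have hN1 : 1 ≤ N := by omega
        obtain ⟨M, rfl⟩ : ∃ M, N = M + 1 := ⟨N - 1, by omega⟩
        simp only [Nat.add_sub_cancel]
        have hGG : G (r - 1) (M + 1) = G (r - 1) M +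
            (2 * ((M + 1 : ℕ) : ℝ) - ((r - 1 : ℕ) : ℝ))⁻¹ * G (r - 1 - 1) M := by
          rw [show r - 1 = (r - 2) + 1 by omega]
          simp only [Nat.add_sub_cancel]
          rw [G_succ, G_succ, Finset.sum_Icc_succ_top (by omega : 1 ≤ M + 1)]
          simp only [Nat.add_sub_cancel]
        have hS : S (r - 1) (M + 1) x = S (r - 1) M x +
            ((-1 : ℝ) ^ ((M + 1) + (r - 1)) * G (r - 1 - 1) (M + 1 - 1) /
              (2 * ((M + 1 : ℕ) : ℝ) - ((r - 1 : ℕ) : ℝ))) * x ^ (2 * (M + 1) - (r - 1)) := by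
          rw [S_eq (r - 1) (M + 1) (by omega : r - 1 ≠ 0),
            S_eq (r - 1) M (by omega : r - 1 ≠ 0)]
          simp only []
          rw [Finset.sum_Icc_succ_top (by omega : 1 ≤ M + 1)]
        rw [hS, hGG]
        simp only [Nat.add_sub_cancel]
        rw [show (M + 1) + (r - 1) = M + r by omega,
          show 2 * (M + 1) - (r - 1) = 2 * M + 3 - r by omega,
          show M + 1 + r = (M + r) + 1 by omega,
          show M + 1 + 1 + r = (M + r) + 2 by omega,
          show 2 * (M + 1) + 1 - r = 2 * M + 3 - r by omega,
          show 2 * (M + 1 + 1) - r - 1 = 2 * M + 3 - r by omega,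
          show 2 * (M + 1 + 1) + 1 - r = (2 * M + 3 - r) + 2 by omega,
          pow_add ((-1:ℝ)) (M + r) 1, pow_add ((-1:ℝ)) (M + r) 2,
          pow_add x (2 * M + 3 - r) 2]
        ring

lemma bd_tendsto (s : ℕ) :
    Tendsto (fun N : ℕ => G s (N - 1) / (2 * (N : ℝ) - (s : ℝ) + 1)) atTop (nhds 0) := by
  have hb : Tendsto (fun N : ℕ => (2 : ℝ) ^ s * (Real.log N ^ s / (2 * (N : ℝ) + (1 - (s : ℝ)))))
      atTop (nhds 0) := by
    have h1 := (Real.tendsto_pow_log_div_mul_add_atTop 2 (1 - (s : ℝ)) s two_ne_zero).comp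
      tendsto_natCast_atTop_atTop
    have h2 := h1.const_mul ((2 : ℝ) ^ s)
    simpa using h2
  apply squeeze_zero'
  · filter_upwards [eventually_ge_atTop (s + 1)] with N hN
    apply div_nonneg (G_nonneg _ _)
    have : (s : ℝ) + 1 ≤ (N : ℝ) := by exact_mod_cast hN
    linarith
  · filter_upwards [eventually_ge_atTop (s + 4)] with N hN
    have hcast : ((N - 1 : ℕ) : ℝ) = (N : ℝ) - 1 := by
      rw [Nat.cast_sub (by omega)]; norm_num
    have hlog1 : 1 ≤ Real.log ((N - 1 : ℕ) : ℝ) := by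
      rw [hcast]
      have h3 : Real.exp 1 ≤ (N : ℝ) - 1 := by
        have := Real.exp_one_lt_d9
        have hN3 : (4 : ℝ) ≤ (N : ℝ) := by exact_mod_cast le_trans (by omega) hN
        linarith
      calc (1 : ℝ) = Real.log (Real.exp 1) := (Real.log_exp 1).symm
        _ ≤ Real.log ((N : ℝ) - 1) := Real.log_le_log (Real.exp_pos 1) h3
    have hlogmono : Real.log ((N - 1 : ℕ) : ℝ) ≤ Real.log N := by
      apply Real.log_le_log
      · rw [hcast]
        have hN3 : (4 : ℝ) ≤ (N : ℝ) := by exact_mod_cast le_trans (by omega) hN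
        linarith
      · rw [hcast]; linarith [Nat.cast_nonneg (α := ℝ) N]
    have hG : G s (N - 1) ≤ 2 ^ s * Real.log N ^ s := by
      calc G s (N - 1) ≤ (∑ k ∈ Finset.Icc 1 (N - 1), (k : ℝ)⁻¹) ^ s := G_le s (N - 1)
        _ ≤ (2 * Real.log N) ^ s := by
            apply pow_le_pow_left₀
            · apply Finset.sum_nonneg; intro k hk
              simp only [Finset.mem_Icc] at hk
              positivity
            · calc ∑ k ∈ Finset.Icc 1 (N - 1), (k : ℝ)⁻¹ ≤ 1 + Real.log ((N - 1 : ℕ) : ℝ) :=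
                  H_le (N - 1)
                _ ≤ 2 * Real.log N := by linarith
        _ = 2 ^ s * Real.log N ^ s := mul_pow 2 (Real.log N) s
    have hden : (0 : ℝ) < 2 * (N : ℝ) - (s : ℝ) + 1 := by
      have : (s : ℝ) + 4 ≤ (N : ℝ) := by exact_mod_cast hN
      linarith
    calc G s (N - 1) / (2 * (N : ℝ) - (s : ℝ) + 1)
        ≤ (2 ^ s * Real.log N ^ s) / (2 * (N : ℝ) - (s : ℝ) + 1) :=
          (div_le_div_iff_of_pos_right hden).2 hG
      _ = 2 ^ s * (Real.log N ^ s / (2 * (N : ℝ) + (1 - (s : ℝ)))) := by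
          rw [show 2 * (N : ℝ) + (1 - (s : ℝ)) = 2 * (N : ℝ) - (s : ℝ) + 1 by ring]
          ring
  exact hb

lemma main_bound (r : ℕ) : ∀ ε > 0, ∃ N₀ : ℕ, ∀ N ≥ N₀, ∀ x : ℝ, 0 ≤ x → x ≤ 1 →
    |S r N x - Real.arctan x ^ r / (Nat.factorial r : ℝ)| ≤ ε := by
  induction r with
  | zero =>
    intro ε hε
    refine ⟨0, fun N _ x _ _ => ?_⟩
    rw [S, if_pos rfl]
    simp only [pow_zero, Nat.factorial_zero, Nat.cast_one, div_one, sub_self, abs_zero]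
    exact hε.le
  | succ s ih =>
    intro ε hε
    obtain ⟨N₁, hN₁⟩ := ih (ε / 2) (half_pos hε)
    obtain ⟨N₂, hN₂⟩ := Metric.tendsto_atTop.1 (bd_tendsto s) (ε / 2) (half_pos hε)
    refine ⟨max (N₁ + 1) (max N₂ (s + 1)), fun N hN x hx0 hx1 => ?_⟩
    have hNN₁ : N₁ ≤ N - 1 := by omega
    have hNs : s + 1 ≤ N := le_trans (le_max_of_le_right (le_max_right _ _)) hN
    have hNN₂ : N₂ ≤ N := le_trans (le_max_of_le_right (le_max_left _ _)) hN
    set k : ℕ := 2 * N - s with hk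
    -- the derivative
    set F' : ℝ → ℝ := fun t =>
      ((S s (N - 1) t - Real.arctan t ^ s / (Nat.factorial s : ℝ)) +
        (-1 : ℝ) ^ (N + (s + 1)) * t ^ k * G s (N - 1)) / (1 + t ^ 2) with hF'
    have hfact : ((s + 1).factorial : ℝ) = ((s : ℝ) + 1) * (s.factorial : ℝ) := by
      rw [Nat.factorial_succ]; push_cast; ring
    have hs0 : (s.factorial : ℝ) ≠ 0 := Nat.cast_ne_zero.2 (Nat.factorial_ne_zero s)
    have hderiv : ∀ t : ℝ, HasDerivAt
        (fun y => S (s + 1) N y - Real.arctan y ^ (s + 1) / (Nat.factorial (s + 1) : ℝ))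
        (F' t) t := by
      intro t
      have hden : (1 : ℝ) + t ^ 2 ≠ 0 := by positivity
      have h1 := S_hasDerivAt (s + 1) N (Nat.succ_ne_zero s) t
      have h2 := ((Real.hasDerivAt_arctan t).pow (s + 1)).div_const ((Nat.factorial (s + 1) : ℝ))
      have h3 := h1.sub h2
      refine h3.congr_deriv ?_; symm
      simp only [Nat.add_sub_cancel]
      have hkey := key_identity (s + 1) (Nat.succ_ne_zero s) N t
      simp only [Nat.add_sub_cancel] at hkey
      rw [show 2 * N + 1 - (s + 1) = k by omega] at hkey
      have hsum2 : (∑ n ∈ Finset.Icc 1 N,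
            (-1 : ℝ) ^ (n + (s + 1)) * t ^ (2 * n - (s + 1) - 1) * G s (n - 1))
          = (S s (N - 1) t + (-1 : ℝ) ^ (N + (s + 1)) * t ^ k * G s (N - 1)) / (1 + t ^ 2) := by
        rw [eq_div_iff hden]
        linear_combination hkey
      rw [hF']
      simp only []
      rw [hsum2, hfact]
      push_cast
      field_simp
      ring
    have hcont : Continuous F' := by
      rw [hF']
      apply Continuous.div
      · exact (((S_continuous s (N - 1)).sub
          ((Real.continuous_arctan.pow s).div_const _)).add
          ((continuous_const.mul (continuous_pow k)).mul continuous_const))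
      · exact continuous_const.add (continuous_pow 2)
      · intro t; positivity
    have hint : IntervalIntegrable F' MeasureTheory.volume 0 x :=
      hcont.intervalIntegrable 0 x
    have hFTC := intervalIntegral.integral_eq_sub_of_hasDerivAt
      (f := fun y => S (s + 1) N y - Real.arctan y ^ (s + 1) / (Nat.factorial (s + 1) : ℝ))
      (fun t _ => hderiv t) hint
    have hF0 : S (s + 1) N 0 - Real.arctan 0 ^ (s + 1) / (Nat.factorial (s + 1) : ℝ) = 0 := by
      rw [S_zero (s + 1) N (Nat.succ_ne_zero s), Real.arctan_zero, zero_pow (Nat.succ_ne_zero s)]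
      norm_num
    rw [hF0, sub_zero] at hFTC
    rw [← hFTC]
    -- now bound the integral
    have hG := G_nonneg s (N - 1)
    have hbound : ∀ t ∈ Set.Icc (0 : ℝ) x, |F' t| ≤ ε / 2 + G s (N - 1) * t ^ k := by
      intro t ht
      obtain ⟨ht0, htx⟩ := ht
      have ht1 : t ≤ 1 := le_trans htx hx1
      have h1 : |F' t| ≤ |(S s (N - 1) t - Real.arctan t ^ s / (Nat.factorial s : ℝ)) +
          (-1 : ℝ) ^ (N + (s + 1)) * t ^ k * G s (N - 1)| := by
        rw [hF']
        simp only []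
        rw [abs_div]
        apply div_le_self (abs_nonneg _)
        rw [abs_of_pos (by positivity : (0:ℝ) < 1 + t ^ 2)]
        nlinarith [sq_nonneg t]
      apply le_trans h1
      apply le_trans (abs_add_le _ _)
      apply add_le_add
      · exact hN₁ (N - 1) hNN₁ t ht0 ht1
      · rw [abs_mul, abs_mul, abs_pow, abs_neg, abs_one, one_pow, one_mul]
        rw [abs_pow, abs_of_nonneg ht0, abs_of_nonneg hG, mul_comm]
    have habs : |∫ t in (0:ℝ)..x, F' t| ≤ ∫ t in (0:ℝ)..x, |F' t| :=
      intervalIntegral.abs_integral_le_integral_abs hx0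
    apply le_trans habs
    have hmono : (∫ t in (0:ℝ)..x, |F' t|) ≤ ∫ t in (0:ℝ)..x, (ε / 2 + G s (N - 1) * t ^ k) := by
      apply intervalIntegral.integral_mono_on hx0
      · exact (hcont.abs).intervalIntegrable 0 x
      · exact ((continuous_const.add (continuous_const.mul (continuous_pow k))).intervalIntegrable
          0 x)
      · exact hbound
    apply le_trans hmono
    rw [intervalIntegral.integral_add (f := fun _ => ε / 2) (g := fun t => G s (N - 1) * t ^ k) (intervalIntegrable_const)
      ((continuous_const.mul (continuous_pow k)).intervalIntegrable 0 x)]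
    rw [intervalIntegral.integral_const, intervalIntegral.integral_const_mul,
      integral_pow]
    have hcast : ((k : ℕ) : ℝ) + 1 = 2 * (N : ℝ) - (s : ℝ) + 1 := by
      rw [hk]
      rw [Nat.cast_sub (by omega : s ≤ 2 * N)]
      push_cast
      ring
    have hd2 : (0 : ℝ) < (k : ℝ) + 1 := by positivity
    have hxk : (x ^ (k + 1) - 0 ^ (k + 1)) / ((k : ℝ) + 1) ≤ 1 / ((k : ℝ) + 1) := by
      rw [zero_pow (Nat.succ_ne_zero k), sub_zero]
      apply div_le_div_of_nonneg_right ?_ hd2.le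
      · exact pow_le_one₀ hx0 hx1
    have hbd2 : G s (N - 1) * ((x ^ (k + 1) - 0 ^ (k + 1)) / ((k : ℝ) + 1)) ≤ ε / 2 := by
      have h5 := hN₂ N hNN₂
      rw [Real.dist_eq, sub_zero] at h5
      have h6 : G s (N - 1) / (2 * (N : ℝ) - (s : ℝ) + 1) ≤ ε / 2 := by
        calc G s (N - 1) / (2 * (N : ℝ) - (s : ℝ) + 1)
            ≤ |G s (N - 1) / (2 * (N : ℝ) - (s : ℝ) + 1)| := le_abs_self _
          _ ≤ ε / 2 := h5.le
      calc G s (N - 1) * ((x ^ (k + 1) - 0 ^ (k + 1)) / ((k : ℝ) + 1))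
          ≤ G s (N - 1) * (1 / ((k : ℝ) + 1)) := by
            apply mul_le_mul_of_nonneg_left hxk hG
        _ = G s (N - 1) / (2 * (N : ℝ) - (s : ℝ) + 1) := by
            rw [mul_one_div, hcast]
        _ ≤ ε / 2 := h6
    have hsm : (x - 0) • (ε / 2) ≤ ε / 2 := by
      rw [sub_zero, smul_eq_mul]
      nlinarith
    linarith

lemma S_tendsto (r : ℕ) (hr : r ≠ 0) (x : ℝ) (hx0 : 0 ≤ x) (hx1 : x ≤ 1) :
    Tendsto (fun N : ℕ => S r N x) atTop
      (nhds (Real.arctan x ^ r / (Nat.factorial r : ℝ))) := by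
  rw [Metric.tendsto_atTop]
  intro ε hε
  obtain ⟨N₀, hN₀⟩ := main_bound r (ε / 2) (half_pos hε)
  refine ⟨N₀, fun n hn => ?_⟩
  rw [Real.dist_eq]
  exact lt_of_le_of_lt (hN₀ n hn x hx0 hx1) (half_lt_self hε)

/-- For `r ≥ 1` and `|x| ≤ 1`,
`arctan(x)^r = r!·∑_{n₁>⋯>n_r>0} (−1)^{n₁−r}·x^{2n₁−r}/∏_{j=1}^{r}(2n_j−r+j−1)`,
where the sum is taken in the iterated order (partial sums truncated by the bound `N`
on all indices). A tuple is encoded as a strictly decreasing function `f : Fin r → ℕ`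
with values in `[1, N]`; the `j`-th denominator factor (with `j = i + 1`) is
`2·f i − r + i`, and `(−1)^{n₁−r} = (−1)^{f 0 + r}`. -/
theorem arctan_pow_series (r : ℕ) (hr : 0 < r) (x : ℝ) (hx : |x| ≤ 1) :
    Tendsto (fun N : ℕ =>
        (Nat.factorial r : ℝ) *
          ∑ f ∈ (Fintype.piFinset fun _ : Fin r => Finset.Icc 1 N).filter
              (fun f => StrictAnti f),
            (-1 : ℝ) ^ (f ⟨0, hr⟩ + r) * x ^ (2 * f ⟨0, hr⟩ - r) /
              ∏ i : Fin r, (2 * (f i : ℝ) - (r : ℝ) + (i : ℕ)))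
      atTop (nhds (Real.arctan x ^ r)) := by
  obtain ⟨s, rfl⟩ : ∃ s, r = s + 1 := ⟨r - 1, by omega⟩
  have h0 : (⟨0, hr⟩ : Fin (s + 1)) = 0 := by
    apply Fin.ext
    simp
  simp only [h0]
  have hrewrite : (fun N : ℕ =>
      ((s + 1).factorial : ℝ) *
        ∑ f ∈ (Fintype.piFinset fun _ : Fin (s + 1) => Finset.Icc 1 N).filter
            (fun f => StrictAnti f),
          (-1 : ℝ) ^ (f 0 + (s + 1)) * x ^ (2 * f 0 - (s + 1)) /
            ∏ i : Fin (s + 1), (2 * (f i : ℝ) - ((s + 1 : ℕ) : ℝ) + (i : ℕ)))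
      = fun N : ℕ => ((s + 1).factorial : ℝ) * S (s + 1) N x := by
    funext N
    rw [theoremSum_eq s N x]
  rw [hrewrite]
  have hfne : ((s + 1).factorial : ℝ) ≠ 0 := Nat.cast_ne_zero.2 (Nat.factorial_ne_zero _)
  rcases le_or_gt 0 x with hx0 | hx0
  · have hx1 : x ≤ 1 := le_trans (le_abs_self x) hx
    have h := (S_tendsto (s + 1) (Nat.succ_ne_zero s) x hx0 hx1).const_mul
      (((s + 1).factorial : ℝ))
    convert h using 2
    rw [mul_div_cancel₀ _ hfne]
  · have hy0 : 0 ≤ -x := by linarith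
    have hy1 : -x ≤ 1 := le_trans (neg_le_abs x) hx
    have h := (S_tendsto (s + 1) (Nat.succ_ne_zero s) (-x) hy0 hy1).const_mul
      (((s + 1).factorial : ℝ))
    have hpar : (fun N : ℕ => ((s + 1).factorial : ℝ) * S (s + 1) N x)
        = fun N : ℕ => ((-1 : ℝ) ^ (s + 1)) * (((s + 1).factorial : ℝ) * S (s + 1) N (-x)) := by
      funext N
      have := S_neg (s + 1) N (-x)
      rw [neg_neg] at this
      rw [this]
      ring
    rw [hpar]
    have h2 := h.const_mul ((-1 : ℝ) ^ (s + 1))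
    convert h2 using 2
    rw [mul_div_cancel₀ _ hfne, Real.arctan_neg, ← mul_pow]
    norm_num
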